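/- Convergence of the finite-n largest zero (from the proof of Theorem 3.6). Under the regularity and exponential-moment assumptions, suppose z⋆ ∈ (0,1] and f_W′(z⋆) > 0. For each n, the set {z ∈ [0,1] : f_W^(n)(z) = 0} is nonempty (it contains 0) and, by continuity of f_W^(n), its supremum ẑ_n := sup{z ∈ [0,1] : f_W^(n)(z) = 0} is itself a zero of f_W^(n). Then ẑ_n → z⋆ as n → ∞. -/

import Mathlib

open MeasureTheory ProbabilityTheory Filter
open scoped Classical BigOperators NNReal Topology

noncomputable section

namespace DefaultCascade

/-- Binomial probability `b(d,z,ℓ) = C(d,ℓ) z^ℓ (1-z)^(d-ℓ)`. -/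
def bin (d : ℕ) (z : ℝ) (ℓ : ℕ) : ℝ := (d.choose ℓ : ℝ) * z ^ ℓ * (1 - z) ^ (d - ℓ)

/-- Binomial tail `β(d,z,ℓ) = Σ_{r=ℓ}^d b(d,z,r)`. -/
def binTail (d : ℕ) (z : ℝ) (ℓ : ℕ) : ℝ := ∑ r ∈ Finset.Icc ℓ d, bin d z r

/-- Convergence in probability to a constant. -/
def TendstoInProb {Ω : Type*} [MeasurableSpace Ω] (P : Measure Ω)
    (f : ℕ → Ω → ℝ) (c : ℝ) : Prop :=
  ∀ ε : ℝ, 0 < ε → Tendsto (fun n => P {ω | ε ≤ |f n ω - c|}) atTop (nhds 0)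

/-- Convergence in distribution (weak convergence of the laws) to a Borel law `ν` on ℝ. -/
def TendstoInDist {Ω : Type*} [MeasurableSpace Ω] (P : Measure Ω)
    (f : ℕ → Ω → ℝ) (ν : Measure ℝ) : Prop :=
  ∀ g : BoundedContinuousFunction ℝ ℝ,
    Tendsto (fun n => ∫ ω, g (f n ω) ∂P) atTop (nhds (∫ x, g x ∂ν))

/-- Supremum of `g` over the time interval `[0, τ]`. -/
def supTo (g : ℝ → ℝ) (τ : ℝ) : ℝ := sSup (g '' Set.Icc 0 τ)

/-- Data of the balls-and-bins default cascade model: a probability space, in/out degrees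
`dp`/`dm`, deterministic types of the `n` institutions, random thresholds `Θ`, random ball
lifetimes `T`, and threshold distributions `q`. -/
structure Model (X : Type*) where
  (Ω : Type*)
  [mΩ : MeasurableSpace Ω]
  (P : Measure Ω)
  (dp : X → ℕ)
  (dm : X → ℕ)
  (typeOf : (n : ℕ) → Fin n → X)
  (Θ : (n : ℕ) → Fin n → Ω → ℕ)
  (T : (n : ℕ) → Fin n → ℕ → Ω → ℝ)
  (q : ℕ → X → ℕ → ℝ)

attribute [instance] Model.mΩ

variable {X : Type*} (M : Model X)

/-- The probabilistic assumptions of the model: `P` is a probability measure, thresholds and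
lifetimes are measurable, `Θ_i` has distribution `q^(n)_{x_i}` supported on `{0,…,d⁺_{x_i}}`,
lifetimes are exponential(1), and all thresholds and lifetimes are mutually independent. -/
structure Model.Valid {X : Type*} (M : Model X) : Prop where
  isProb : IsProbabilityMeasure M.P
  measΘ : ∀ n (i : Fin n), Measurable (M.Θ n i)
  measT : ∀ n (i : Fin n) (j : ℕ), Measurable (M.T n i j)
  q_nonneg : ∀ n x θ, 0 ≤ M.q n x θ
  Θ_le : ∀ n (i : Fin n) ω, M.Θ n i ω ≤ M.dp (M.typeOf n i)
  Θ_dist : ∀ n (i : Fin n) (θ : ℕ),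
    M.P {ω | M.Θ n i ω = θ} = ENNReal.ofReal (M.q n (M.typeOf n i) θ)
  T_exp : ∀ n (i : Fin n) (j : ℕ) (t : ℝ), 0 ≤ t →
    M.P {ω | t < M.T n i j ω} = ENNReal.ofReal (Real.exp (-t))
  indep : ∀ n, iIndepFun
    (fun k : (Fin n) ⊕ (Fin n × ℕ) =>
      Sum.elim (fun i ω => (M.Θ n i ω : ℝ)) (fun p ω => M.T n p.1 p.2 ω) k) M.P

/-- Number of dead balls of institution `i` at time `t`. -/
def deadCount (n : ℕ) (i : Fin n) (t : ℝ) (ω : M.Ω) : ℕ :=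
  ((Finset.range (M.dp (M.typeOf n i))).filter (fun j => M.T n i j ω ≤ t)).card

/-- Institution `i` is solvent at time `t` iff its dead-ball count is `< Θ_i`. -/
def solvent (n : ℕ) (i : Fin n) (t : ℝ) (ω : M.Ω) : Prop :=
  deadCount M n i t ω < M.Θ n i ω

/-- `S_{x,θ,ℓ}^(n)(t)`: solvent institutions of type `x`, threshold `θ`, exactly `ℓ` dead balls. -/
def Scount (n : ℕ) (x : X) (θ ℓ : ℕ) (t : ℝ) (ω : M.Ω) : ℕ :=
  (Finset.univ.filter (fun i : Fin n =>
    M.typeOf n i = x ∧ M.Θ n i ω = θ ∧ deadCount M n i t ω = ℓ ∧ solvent M n i t ω)).card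

/-- `S_n(t)`: number of solvent institutions at time `t`. -/
def Sn (n : ℕ) (t : ℝ) (ω : M.Ω) : ℕ :=
  (Finset.univ.filter (fun i : Fin n => solvent M n i t ω)).card

/-- `D_n(t) = n − S_n(t)`: number of defaulted institutions at time `t`. -/
def Dn (n : ℕ) (t : ℝ) (ω : M.Ω) : ℕ := n - Sn M n t ω

/-- `D_x^(n)(t)`: number of defaulted institutions of type `x` at time `t`. -/
def Dxcount (n : ℕ) (x : X) (t : ℝ) (ω : M.Ω) : ℕ :=
  (Finset.univ.filter (fun i : Fin n => M.typeOf n i = x ∧ ¬ solvent M n i t ω)).card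

/-- `D_{x,θ}^(n)(t)`: defaulted institutions of type `x` with threshold `θ` at time `t`. -/
def Dxθcount (n : ℕ) (x : X) (θ : ℕ) (t : ℝ) (ω : M.Ω) : ℕ :=
  (Finset.univ.filter (fun i : Fin n =>
    M.typeOf n i = x ∧ M.Θ n i ω = θ ∧ ¬ solvent M n i t ω)).card

/-- `L_n(t)`: total number of alive balls at time `t`. -/
def Ln (n : ℕ) (t : ℝ) (ω : M.Ω) : ℕ :=
  ∑ i : Fin n, (M.dp (M.typeOf n i) - deadCount M n i t ω)

/-- `H⁺_n(t)`: number of alive balls in solvent institutions at time `t`. -/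
def Hn (n : ℕ) (t : ℝ) (ω : M.Ω) : ℕ :=
  ∑ i ∈ Finset.univ.filter (fun i : Fin n => solvent M n i t ω),
    (M.dp (M.typeOf n i) - deadCount M n i t ω)

/-- `I⁺_n(t) = L_n(t) − H⁺_n(t)`. -/
def In' (n : ℕ) (t : ℝ) (ω : M.Ω) : ℕ := Ln M n t ω - Hn M n t ω

/-- `W_n(t) = L_n(t) − Σ_i d⁻_{x_i} 1{i solvent at t}`. -/
def Wn (n : ℕ) (t : ℝ) (ω : M.Ω) : ℝ :=
  (Ln M n t ω : ℝ) -
    ∑ i : Fin n, (if solvent M n i t ω then (M.dm (M.typeOf n i) : ℝ) else 0)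

/-- `τ⋆_n = inf {t ≥ 0 : W_n(t) < 0}`. -/
def tauStar (n : ℕ) (ω : M.Ω) : ℝ := sInf {t : ℝ | 0 ≤ t ∧ Wn M n t ω < 0}

/-- Empirical fraction `μ_x^(n)` of institutions of type `x`. -/
def empμ (n : ℕ) (x : X) : ℝ :=
  ((Finset.univ.filter (fun i : Fin n => M.typeOf n i = x)).card : ℝ) / n

/-- `λ^(n) = Σ_x d⁺_x μ_x^(n)`. -/
def lamn (n : ℕ) : ℝ := ∑' x, (M.dp x : ℝ) * empμ M n x

/-- Finite-`n` function `f_S^(n)`. -/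
def fSn (n : ℕ) (z : ℝ) : ℝ :=
  ∑' x, empμ M n x *
    ∑ θ ∈ Finset.Icc 1 (M.dp x), M.q n x θ * binTail (M.dp x) z (M.dp x - θ + 1)

/-- Finite-`n` function `f_D^(n) = 1 - f_S^(n)`. -/
def fDn (n : ℕ) (z : ℝ) : ℝ := 1 - fSn M n z

/-- Finite-`n` function `f_{H⁺}^(n)`. -/
def fHn (n : ℕ) (z : ℝ) : ℝ :=
  ∑' x, empμ M n x *
    ∑ θ ∈ Finset.Icc 1 (M.dp x), M.q n x θ *
      ∑ ℓ ∈ Finset.Icc (M.dp x - θ + 1) (M.dp x), (ℓ : ℝ) * bin (M.dp x) z ℓ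

/-- Finite-`n` function `f_{I⁺}^(n)(z) = λ^(n) z − f_{H⁺}^(n)(z)`. -/
def fIn (n : ℕ) (z : ℝ) : ℝ := lamn M n * z - fHn M n z

/-- Finite-`n` function `f_W^(n)`. -/
def fWn (n : ℕ) (z : ℝ) : ℝ :=
  lamn M n * z - ∑' x, empμ M n x * (M.dm x : ℝ) *
    ∑ θ ∈ Finset.Icc 1 (M.dp x), M.q n x θ * binTail (M.dp x) z (M.dp x - θ + 1)

/-- `ẑ_n`: the largest zero of `f_W^(n)` in `[0,1]`. -/
def zhat (n : ℕ) : ℝ := sSup {z : ℝ | z ∈ Set.Icc (0:ℝ) 1 ∧ fWn M n z = 0}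

/-- Limit function `f_S`. -/
def fS (μ : X → ℝ) (qq : X → ℕ → ℝ) (z : ℝ) : ℝ :=
  ∑' x, μ x * ∑ θ ∈ Finset.Icc 1 (M.dp x), qq x θ * binTail (M.dp x) z (M.dp x - θ + 1)

/-- Limit function `f_D = 1 − f_S`. -/
def fD (μ : X → ℝ) (qq : X → ℕ → ℝ) (z : ℝ) : ℝ := 1 - fS M μ qq z

/-- Limit function `f_{H⁺}`. -/
def fH (μ : X → ℝ) (qq : X → ℕ → ℝ) (z : ℝ) : ℝ :=
  ∑' x, μ x * ∑ θ ∈ Finset.Icc 1 (M.dp x), qq x θ *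
    ∑ ℓ ∈ Finset.Icc (M.dp x - θ + 1) (M.dp x), (ℓ : ℝ) * bin (M.dp x) z ℓ

/-- Limit function `f_{I⁺}(z) = λ z − f_{H⁺}(z)`. -/
def fI (μ : X → ℝ) (qq : X → ℕ → ℝ) (lam : ℝ) (z : ℝ) : ℝ := lam * z - fH M μ qq z

/-- Limit function `f_W`. -/
def fW (μ : X → ℝ) (qq : X → ℕ → ℝ) (lam : ℝ) (z : ℝ) : ℝ :=
  lam * z - ∑' x, μ x * (M.dm x : ℝ) *
    ∑ θ ∈ Finset.Icc 1 (M.dp x), qq x θ * binTail (M.dp x) z (M.dp x - θ + 1)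

/-- `z⋆`: the largest zero of `f_W` in `[0,1]`. -/
def zstar (μ : X → ℝ) (qq : X → ℕ → ℝ) (lam : ℝ) : ℝ :=
  sSup {z : ℝ | z ∈ Set.Icc (0:ℝ) 1 ∧ fW M μ qq lam z = 0}

/-- The regularity assumptions: `μ^(n) → μ`, `q^(n) → q`, both limits probability
distributions, balanced degrees, and `λ^(n) → λ ∈ (0,∞)`. -/
structure Regular (μ : X → ℝ) (qq : X → ℕ → ℝ) (lam : ℝ) : Prop where
  μ_nonneg : ∀ x, 0 ≤ μ x
  μ_sum : HasSum μ 1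
  q_nonneg : ∀ x θ, 0 ≤ qq x θ
  q_supp : ∀ x θ, M.dp x < θ → qq x θ = 0
  q_sum : ∀ x, ∑ θ ∈ Finset.range (M.dp x + 1), qq x θ = 1
  μ_conv : ∀ x, Tendsto (fun n => empμ M n x) atTop (nhds (μ x))
  q_conv : ∀ x θ, θ ≤ M.dp x → Tendsto (fun n => M.q n x θ) atTop (nhds (qq x θ))
  deg_bal : ∀ n, lamn M n = ∑' x, (M.dm x : ℝ) * empμ M n x
  lam_conv : Tendsto (fun n => lamn M n) atTop (nhds lam)
  lam_pos : 0 < lam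
  lam_sum : HasSum (fun x => (M.dp x : ℝ) * μ x) lam

/-- The exponential-moment assumption. -/
def ExpMoment : Prop :=
  ∀ A : ℝ, 1 < A →
    (∃ C : ℝ, ∀ n, Summable (fun x => empμ M n x * A ^ (M.dp x)) ∧
      ∑' x, empμ M n x * A ^ (M.dp x) ≤ C) ∧
    (∃ C : ℝ, ∀ n, Summable (fun x => empμ M n x * A ^ (M.dm x)) ∧
      ∑' x, empμ M n x * A ^ (M.dm x) ≤ C)

/-- `φ_{x,θ,j}(v) = μ_x q_x(θ) β(d⁺_x, v, j)`. -/
def phiF (μ : X → ℝ) (qq : X → ℕ → ℝ) (x : X) (θ j : ℕ) (v : ℝ) : ℝ :=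
  μ x * qq x θ * binTail (M.dp x) v j

/-- The covariance kernel `σ_{x,θ,s,r}(y)` (with the convention `0` when `r > d⁺_x`). -/
def sigmaSR (μ : X → ℝ) (qq : X → ℕ → ℝ) (x : X) (θ s r : ℕ) (y : ℝ) : ℝ :=
  if r ≤ M.dp x then
    (1/2) * y ^ (s + r) * ∑ j ∈ Finset.Icc r (M.dp x),
      (((j-1).choose (s-1) : ℝ)) * (((j-1).choose (r-1) : ℝ)) *
        ∫ v in y..(1:ℝ), (v - y) ^ (2*j - s - r) * (v ^ (2*j))⁻¹ *
          deriv (phiF M μ qq x θ j) v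
  else 0

/-- System-wide wealth aggregation function `Γ_n^◇(t)` with deterministic losses. -/
def Gamma (Lsoc Ldia : X → ℝ) (Γbar : ℕ → ℝ) (n : ℕ) (t : ℝ) (ω : M.Ω) : ℝ :=
  Γbar n - (∑' x, Lsoc x * (Dxcount M n x t ω : ℝ))
    - ∑' x, Ldia x * ∑ θ ∈ Finset.Icc 1 (M.dp x), ∑ ℓ ∈ Finset.Icc 1 (θ - 1),
        (ℓ : ℝ) * (Scount M n x θ ℓ t ω : ℝ)

/-- `f_{x,D}(z)`. -/
def fxD (μ : X → ℝ) (qq : X → ℕ → ℝ) (x : X) (z : ℝ) : ℝ :=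
  μ x * (1 - ∑ θ ∈ Finset.Icc 1 (M.dp x), qq x θ * binTail (M.dp x) z (M.dp x - θ + 1))

/-- Limit function `f_◇`. -/
def fDia (μ : X → ℝ) (qq : X → ℕ → ℝ) (Lsoc Ldia : X → ℝ) (Γd : ℝ) (z : ℝ) : ℝ :=
  Γd - (∑' x, Lsoc x * fxD M μ qq x z)
    - ∑' x, Ldia x * ∑ θ ∈ Finset.Icc 1 (M.dp x), ∑ ℓ ∈ Finset.Icc 1 (θ - 1),
        (ℓ : ℝ) * (μ x * qq x θ * bin (M.dp x) (1 - z) ℓ)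

/-- `f_{x,D}^(n)(z)`. -/
def fxDn (n : ℕ) (x : X) (z : ℝ) : ℝ :=
  empμ M n x *
    (1 - ∑ θ ∈ Finset.Icc 1 (M.dp x), M.q n x θ * binTail (M.dp x) z (M.dp x - θ + 1))

/-- Finite-`n` function `f_◇^(n)`. -/
def fDian (Lsoc Ldia : X → ℝ) (Γbar : ℕ → ℝ) (n : ℕ) (z : ℝ) : ℝ :=
  Γbar n / n - (∑' x, Lsoc x * fxDn M n x z)
    - ∑' x, Ldia x * ∑ θ ∈ Finset.Icc 1 (M.dp x), ∑ ℓ ∈ Finset.Icc 1 (θ - 1),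
        (ℓ : ℝ) * (empμ M n x * M.q n x θ * bin (M.dp x) (1 - z) ℓ)

/-- `I_x^(n)(t)`: infected links leading to institutions of type `x`. -/
def Ixcount (n : ℕ) (x : X) (t : ℝ) (ω : M.Ω) : ℕ :=
  ∑ θ ∈ Finset.Icc 1 (M.dp x),
    ((θ - 1) * Dxθcount M n x θ t ω + ∑ ℓ ∈ Finset.Icc 1 (θ - 1), ℓ * Scount M n x θ ℓ t ω)

/-- System-wide wealth `Γ_n^◇(t)` with random losses. -/
def GammaR (LD LI : X → ℕ → M.Ω → ℝ) (Γbar : ℕ → ℝ) (n : ℕ) (t : ℝ) (ω : M.Ω) : ℝ :=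
  Γbar n - (∑' x, ∑ i ∈ Finset.range (Dxcount M n x t ω), LD x i ω)
    - ∑' x, ∑ i ∈ Finset.range (Ixcount M n x t ω), LI x i ω

/-- `f_{x,I}^(n)(z)`. -/
def fxIn (n : ℕ) (x : X) (z : ℝ) : ℝ :=
  ∑ θ ∈ Finset.Icc 1 (M.dp x), empμ M n x * M.q n x θ *
    (((θ : ℝ) - 1) - ∑ s ∈ Finset.Icc (M.dp x - θ + 2) (M.dp x), binTail (M.dp x) z s)

/-- Finite-`n` function `f_◇^(n)` for random losses. -/
def fDiaRn (LbarD LbarI : X → ℝ) (Γbar : ℕ → ℝ) (n : ℕ) (z : ℝ) : ℝ :=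
  Γbar n / n - (∑' x, LbarD x * fxDn M n x z) - ∑' x, LbarI x * fxIn M n x z

end DefaultCascade

namespace DefaultCascade

section Aux
variable {X : Type*}

lemma aux_bin_nonneg {d ℓ : ℕ} {z : ℝ} (h0 : 0 ≤ z) (h1 : z ≤ 1) : 0 ≤ bin d z ℓ := by
  unfold bin
  have : (0:ℝ) ≤ 1 - z := by linarith
  positivity

lemma aux_bin_sum (d : ℕ) (z : ℝ) : ∑ r ∈ Finset.range (d+1), bin d z r = 1 := by
  have h := add_pow z (1-z) d
  simp only [add_sub_cancel, one_pow] at h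
  rw [h]
  unfold bin; apply Finset.sum_congr rfl; intro r _; ring

lemma aux_binTail_nonneg {d ℓ : ℕ} {z : ℝ} (h0 : 0 ≤ z) (h1 : z ≤ 1) : 0 ≤ binTail d z ℓ :=
  Finset.sum_nonneg fun _ _ => aux_bin_nonneg h0 h1

lemma aux_binTail_le_one {d ℓ : ℕ} {z : ℝ} (h0 : 0 ≤ z) (h1 : z ≤ 1) : binTail d z ℓ ≤ 1 := by
  rw [← aux_bin_sum d z]
  apply Finset.sum_le_sum_of_subset_of_nonneg
  · intro r hr
    simp only [Finset.mem_Icc] at hr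
    simp only [Finset.mem_range]; omega
  · intro r _ _; exact aux_bin_nonneg h0 h1

lemma aux_binTail_zero {d ℓ : ℕ} (h : 1 ≤ ℓ) : binTail d 0 ℓ = 0 := by
  unfold binTail
  apply Finset.sum_eq_zero
  intro r hr
  simp only [Finset.mem_Icc] at hr
  unfold bin
  rw [zero_pow (by omega)]
  ring

lemma aux_binTail_one {d ℓ : ℕ} (h : ℓ ≤ d) : binTail d 1 ℓ = 1 := by
  unfold binTail bin
  rw [Finset.sum_eq_single d]
  · simp
  · intro r hr hne
    simp only [Finset.mem_Icc] at hr
    rw [sub_self, zero_pow (by omega)]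
    ring
  · intro hd
    simp only [Finset.mem_Icc] at hd
    omega

lemma aux_binTail_continuous (d ℓ : ℕ) : Continuous fun z : ℝ => binTail d z ℓ := by
  unfold binTail bin
  continuity

/-- The finite set of types present at stage `n`. -/
def typesF (M : Model X) (n : ℕ) : Finset X := Finset.univ.image (M.typeOf n)

/-- inner function `H_n(x,z)`. -/
def auxH (M : Model X) (n : ℕ) (x : X) (z : ℝ) : ℝ :=
  ∑ θ ∈ Finset.Icc 1 (M.dp x), M.q n x θ * binTail (M.dp x) z (M.dp x - θ + 1)

def auxF (M : Model X) (n : ℕ) (x : X) (z : ℝ) : ℝ :=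
  empμ M n x * (M.dm x : ℝ) * auxH M n x z

lemma aux_fWn_eq' (M : Model X) (n : ℕ) (z : ℝ) :
    fWn M n z = lamn M n * z - ∑' x, auxF M n x z := rfl

lemma aux_empμ_nonneg (M : Model X) (n : ℕ) (x : X) : 0 ≤ empμ M n x := by
  unfold empμ; positivity

lemma aux_empμ_eq_zero (M : Model X) {n : ℕ} {x : X} (hx : x ∉ typesF M n) :
    empμ M n x = 0 := by
  unfold empμ
  rw [Finset.filter_false_of_mem, Finset.card_empty]
  · simp
  · intro i _ h
    exact hx (Finset.mem_image.2 ⟨i, Finset.mem_univ i, h⟩)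

lemma aux_empμ_sum (M : Model X) {n : ℕ} (hn : 0 < n) :
    ∑ x ∈ typesF M n, empμ M n x = 1 := by
  unfold empμ
  rw [← Finset.sum_div, ← Nat.cast_sum]
  rw [← Finset.card_eq_sum_card_fiberwise (f := M.typeOf n) (t := typesF M n)
    (fun i _ => Finset.mem_image.2 ⟨i, Finset.mem_univ i, rfl⟩)]
  simp only [Finset.card_univ, Fintype.card_fin]
  field_simp

lemma aux_tsum_support (M : Model X) (n : ℕ) (F : X → ℝ)
    (h : ∀ x ∉ typesF M n, F x = 0) : ∑' x, F x = ∑ x ∈ typesF M n, F x :=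
  tsum_eq_sum h

lemma aux_q_sum_le_one (M : Model X) (hM : M.Valid) {n : ℕ} {x : X}
    (hx : x ∈ typesF M n) : ∑ θ ∈ Finset.Icc 1 (M.dp x), M.q n x θ ≤ 1 := by
  obtain ⟨i, _, hi⟩ := Finset.mem_image.1 hx
  haveI := hM.isProb
  have hms : ∀ θ : ℕ, MeasurableSet {ω | M.Θ n i ω = θ} := fun θ =>
    (hM.measΘ n i) (measurableSet_singleton θ)
  have hdisj : (Finset.Icc 1 (M.dp x) : Set ℕ).PairwiseDisjoint
      (fun θ => {ω | M.Θ n i ω = θ}) := by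
    intro a _ b _ hab
    refine Set.disjoint_left.2 fun ω ha hb => hab ?_
    simp only [Set.mem_setOf_eq] at ha hb
    rw [← ha, ← hb]
  have h1 : ∑ θ ∈ Finset.Icc 1 (M.dp x), M.P {ω | M.Θ n i ω = θ} ≤ 1 := by
    rw [← MeasureTheory.measure_biUnion_finset hdisj (fun θ _ => hms θ)]
    exact (MeasureTheory.prob_le_one)
  have h2 : ∑ θ ∈ Finset.Icc 1 (M.dp x), M.P {ω | M.Θ n i ω = θ}
      = ENNReal.ofReal (∑ θ ∈ Finset.Icc 1 (M.dp x), M.q n x θ) := by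
    rw [ENNReal.ofReal_sum_of_nonneg (fun θ _ => hM.q_nonneg n x θ)]
    exact Finset.sum_congr rfl fun θ _ => by rw [hM.Θ_dist n i θ, hi]
  rw [h2] at h1
  exact ENNReal.ofReal_le_one.1 h1

end Aux
end DefaultCascade
namespace DefaultCascade
section Aux2
variable {X : Type*}

lemma aux_auxF_zero (M : Model X) {n : ℕ} {x : X} (hx : x ∉ typesF M n) (z : ℝ) :
    auxF M n x z = 0 := by
  unfold auxF
  rw [aux_empμ_eq_zero M hx]
  ring

lemma aux_fWn_eq (M : Model X) (n : ℕ) (z : ℝ) :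
    fWn M n z = lamn M n * z - ∑ x ∈ typesF M n, auxF M n x z := by
  rw [aux_fWn_eq' M n z, aux_tsum_support M n _ (fun x hx => aux_auxF_zero M hx z)]

lemma aux_fWn_continuous (M : Model X) (n : ℕ) : Continuous (fWn M n) := by
  have : fWn M n = fun z => lamn M n * z - ∑ x ∈ typesF M n, auxF M n x z :=
    funext fun z => aux_fWn_eq M n z
  rw [this]
  apply Continuous.sub (by continuity)
  apply continuous_finset_sum
  intro x _
  unfold auxF auxH
  apply Continuous.mul continuous_const
  apply continuous_finset_sum
  intro θ _
  exact Continuous.mul continuous_const (aux_binTail_continuous _ _)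

lemma aux_auxH_zero (M : Model X) (n : ℕ) (x : X) : auxH M n x 0 = 0 := by
  unfold auxH
  apply Finset.sum_eq_zero
  intro θ _
  rw [aux_binTail_zero (by omega)]
  ring

lemma aux_fWn_zero (M : Model X) (n : ℕ) : fWn M n 0 = 0 := by
  rw [aux_fWn_eq]
  rw [Finset.sum_eq_zero (fun x _ => by unfold auxF; rw [aux_auxH_zero]; ring)]
  ring

lemma aux_lamn_eq (M : Model X) (n : ℕ) :
    lamn M n = ∑ x ∈ typesF M n, (M.dp x : ℝ) * empμ M n x := by
  refine aux_tsum_support M n _ (fun x hx => ?_)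
  rw [aux_empμ_eq_zero M hx]; ring

lemma aux_auxH_nonneg (M : Model X) (hM : M.Valid) (n : ℕ) (x : X) {z : ℝ}
    (h0 : 0 ≤ z) (h1 : z ≤ 1) : 0 ≤ auxH M n x z :=
  Finset.sum_nonneg fun θ _ =>
    mul_nonneg (hM.q_nonneg n x θ) (aux_binTail_nonneg h0 h1)

lemma aux_auxH_le (M : Model X) (hM : M.Valid) {n : ℕ} {x : X} (hx : x ∈ typesF M n)
    {z : ℝ} (h0 : 0 ≤ z) (h1 : z ≤ 1) : auxH M n x z ≤ 1 := by
  calc auxH M n x z ≤ ∑ θ ∈ Finset.Icc 1 (M.dp x), M.q n x θ := by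
        apply Finset.sum_le_sum
        intro θ _
        calc M.q n x θ * binTail (M.dp x) z (M.dp x - θ + 1)
            ≤ M.q n x θ * 1 :=
              mul_le_mul_of_nonneg_left (aux_binTail_le_one h0 h1) (hM.q_nonneg n x θ)
          _ = M.q n x θ := mul_one _
    _ ≤ 1 := aux_q_sum_le_one M hM hx

lemma aux_fWn_one (M : Model X) (hM : M.Valid) {μ : X → ℝ} {qq : X → ℕ → ℝ} {lam : ℝ}
    (hreg : Regular M μ qq lam) (n : ℕ) : 0 ≤ fWn M n 1 := by
  rw [aux_fWn_eq, mul_one]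
  have hbal : lamn M n = ∑ x ∈ typesF M n, (M.dm x : ℝ) * empμ M n x := by
    rw [hreg.deg_bal n]
    refine aux_tsum_support M n _ (fun x hx => ?_)
    rw [aux_empμ_eq_zero M hx]; ring
  rw [hbal, sub_nonneg]
  apply Finset.sum_le_sum
  intro x hx
  unfold auxF
  rw [mul_comm (empμ M n x) ((M.dm x : ℝ))]
  calc (M.dm x : ℝ) * empμ M n x * auxH M n x 1
      ≤ (M.dm x : ℝ) * empμ M n x * 1 := by
        apply mul_le_mul_of_nonneg_left (aux_auxH_le M hM hx zero_le_one le_rfl)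
        exact mul_nonneg (Nat.cast_nonneg _) (aux_empμ_nonneg M n x)
    _ = (M.dm x : ℝ) * empμ M n x := mul_one _

lemma aux_zhat_mem (M : Model X) (n : ℕ) :
    zhat M n ∈ {z : ℝ | z ∈ Set.Icc (0:ℝ) 1 ∧ fWn M n z = 0} := by
  have hset : {z : ℝ | z ∈ Set.Icc (0:ℝ) 1 ∧ fWn M n z = 0}
      = Set.Icc (0:ℝ) 1 ∩ fWn M n ⁻¹' {0} := by
    ext z; simp [Set.mem_setOf_eq, Set.mem_preimage]
  have hcl : IsClosed {z : ℝ | z ∈ Set.Icc (0:ℝ) 1 ∧ fWn M n z = 0} := by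
    rw [hset]
    exact isClosed_Icc.inter (isClosed_singleton.preimage (aux_fWn_continuous M n))
  have hne : {z : ℝ | z ∈ Set.Icc (0:ℝ) 1 ∧ fWn M n z = 0}.Nonempty :=
    ⟨0, ⟨le_rfl, zero_le_one⟩, aux_fWn_zero M n⟩
  have hbdd : BddAbove {z : ℝ | z ∈ Set.Icc (0:ℝ) 1 ∧ fWn M n z = 0} :=
    ⟨1, fun z hz => hz.1.2⟩
  exact hcl.csSup_mem hne hbdd

end Aux2
end DefaultCascade
namespace DefaultCascade
section Aux3
open Filter
variable {X : Type*}

lemma aux_nat_ineq {K m : ℕ} (hK : 1 ≤ K) (h : K ≤ m) : m * 2^K ≤ K * 2^m := by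
  induction m with
  | zero => omega
  | succ m ih =>
    rcases Nat.lt_or_ge K (m+1) with h' | h'
    · have hKm : K ≤ m := by omega
      have h1 := ih hKm
      have h2 : 2^K ≤ 2^m := Nat.pow_le_pow_right (by norm_num) hKm
      have h3 : 2^K ≤ K * 2^m := le_trans h2 (Nat.le_mul_of_pos_left _ (by omega))
      calc (m+1) * 2^K = m * 2^K + 2^K := by ring
        _ ≤ K * 2^m + K * 2^m := by omega
        _ = K * 2^(m+1) := by ring
    · have : K = m + 1 := by omega
      subst this; exact le_rfl

lemma aux_cast_le_two_pow (m : ℕ) : (m : ℝ) ≤ 2 ^ m := by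
  have := Nat.lt_two_pow_self (n := m)
  exact_mod_cast this.le

lemma aux_summable_finsupport (M : Model X) (n : ℕ) (g : X → ℝ) :
    Summable (fun x => empμ M n x * g x) := by
  apply summable_of_ne_finset_zero (s := typesF M n)
  intro x hx
  rw [aux_empμ_eq_zero M hx]; ring

lemma aux_limit_summable (M : Model X) {μ : X → ℝ} (hμ0 : ∀ x, 0 ≤ μ x)
    (hconv : ∀ x, Tendsto (fun n => empμ M n x) atTop (nhds (μ x)))
    {g : X → ℝ} (hg : ∀ x, 0 ≤ g x) {C : ℝ}
    (h : ∀ n, Summable (fun x => empμ M n x * g x) ∧ ∑' x, empμ M n x * g x ≤ C) :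
    Summable (fun x => μ x * g x) ∧ ∑' x, μ x * g x ≤ C := by
  have hsum : ∀ s : Finset X, ∑ x ∈ s, μ x * g x ≤ C := by
    intro s
    have ht : Tendsto (fun n => ∑ x ∈ s, empμ M n x * g x) atTop
        (nhds (∑ x ∈ s, μ x * g x)) :=
      tendsto_finset_sum s (fun x _ => (hconv x).mul_const (g x))
    refine le_of_tendsto ht (Filter.Eventually.of_forall fun n => ?_)
    exact le_trans (Summable.sum_le_tsum s
      (fun x _ => mul_nonneg (aux_empμ_nonneg M n x) (hg x)) (h n).1) (h n).2
  have hS : Summable fun x => μ x * g x :=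
    summable_of_sum_le (fun x => mul_nonneg (hμ0 x) (hg x)) hsum
  exact ⟨hS, Summable.tsum_le_of_sum_le hS hsum⟩

lemma aux_abs_eq (a b : ℝ) (ha : 0 ≤ a) (hb : 0 ≤ b) :
    |a - b| = a + b - 2 * min a b := by
  rcases le_total a b with h | h
  · rw [abs_of_nonpos (by linarith), min_eq_left h]; ring
  · rw [abs_of_nonneg (by linarith), min_eq_right h]; ring

lemma aux_scheffe (M : Model X) {μ : X → ℝ} (hμ0 : ∀ x, 0 ≤ μ x) (hμ : HasSum μ 1)
    (hconv : ∀ x, Tendsto (fun n => empμ M n x) atTop (nhds (μ x))) :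
    Tendsto (fun n => ∑' x, |empμ M n x - μ x|) atTop (nhds 0) := by
  have hμs : Summable μ := hμ.summable
  have hmin_le : ∀ n x, ‖min (empμ M n x) (μ x)‖ ≤ μ x := by
    intro n x
    rw [Real.norm_eq_abs, abs_of_nonneg (le_min (aux_empμ_nonneg M n x) (hμ0 x))]
    exact min_le_right _ _
  have hminS : ∀ n, Summable (fun x => min (empμ M n x) (μ x)) := fun n =>
    Summable.of_nonneg_of_le (fun x => le_min (aux_empμ_nonneg M n x) (hμ0 x))
      (fun x => min_le_right _ _) hμs
  have hσ : Tendsto (fun n => ∑' x, min (empμ M n x) (μ x)) atTop (nhds 1) := by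
    have := tendsto_tsum_of_dominated_convergence (f := fun n x => min (empμ M n x) (μ x))
      (g := fun x => μ x) (bound := μ) hμs
      (fun x => by simpa using (hconv x).min (tendsto_const_nhds (x := μ x)))
      (Filter.Eventually.of_forall fun n x => hmin_le n x)
    rwa [hμ.tsum_eq] at this
  have key : ∀ n, 0 < n → ∑' x, |empμ M n x - μ x|
      = 2 - 2 * ∑' x, min (empμ M n x) (μ x) := by
    intro n hn
    have h1 : ∑' x, empμ M n x = 1 := by
      rw [aux_tsum_support M n _ (fun x hx => aux_empμ_eq_zero M hx)]
      exact aux_empμ_sum M hn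
    have heS : Summable (fun x => empμ M n x) := by
      have := aux_summable_finsupport M n (fun _ => (1:ℝ))
      simpa using this
    have heq : (fun x => |empμ M n x - μ x|)
        = fun x => (empμ M n x + μ x) - 2 * min (empμ M n x) (μ x) :=
      funext fun x => aux_abs_eq _ _ (aux_empμ_nonneg M n x) (hμ0 x)
    rw [heq, Summable.tsum_sub (heS.add hμs) ((hminS n).mul_left 2),
      Summable.tsum_add heS hμs, h1, hμ.tsum_eq, tsum_mul_left]
    ring
  have htend : Tendsto (fun n => 2 - 2 * ∑' x, min (empμ M n x) (μ x)) atTop (nhds 0) := by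
    have := (tendsto_const_nhds (x := (2:ℝ)) (f := atTop (α := ℕ))).sub (hσ.const_mul 2)
    norm_num at this
    exact this
  exact Tendsto.congr'
    (by filter_upwards [eventually_gt_atTop 0] with n hn using (key n hn).symm) htend

end Aux3
end DefaultCascade
namespace DefaultCascade
section Aux4
open Filter
variable {X : Type*}

/-- limit inner function. -/
def auxHL (M : Model X) (qq : X → ℕ → ℝ) (x : X) (z : ℝ) : ℝ :=
  ∑ θ ∈ Finset.Icc 1 (M.dp x), qq x θ * binTail (M.dp x) z (M.dp x - θ + 1)

def auxG (M : Model X) (μ : X → ℝ) (qq : X → ℕ → ℝ) (x : X) (z : ℝ) : ℝ :=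
  μ x * (M.dm x : ℝ) * auxHL M qq x z

/-- `ℓ¹` discrepancy of threshold distributions. -/
def auxE (M : Model X) (qq : X → ℕ → ℝ) (n : ℕ) (x : X) : ℝ :=
  ∑ θ ∈ Finset.Icc 1 (M.dp x), |M.q n x θ - qq x θ|

lemma aux_fW_eq' (M : Model X) (μ : X → ℝ) (qq : X → ℕ → ℝ) (lam : ℝ) (z : ℝ) :
    fW M μ qq lam z = lam * z - ∑' x, auxG M μ qq x z := rfl

variable {M : Model X} {μ : X → ℝ} {qq : X → ℕ → ℝ} {lam : ℝ}

lemma aux_qq_sum_le_one (hreg : Regular M μ qq lam) (x : X) :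
    ∑ θ ∈ Finset.Icc 1 (M.dp x), qq x θ ≤ 1 := by
  rw [← hreg.q_sum x]
  apply Finset.sum_le_sum_of_subset_of_nonneg
  · intro θ hθ
    simp only [Finset.mem_Icc] at hθ
    simp only [Finset.mem_range]; omega
  · intro θ _ _; exact hreg.q_nonneg x θ

lemma aux_auxHL_nonneg (hreg : Regular M μ qq lam) (x : X) {z : ℝ}
    (h0 : 0 ≤ z) (h1 : z ≤ 1) : 0 ≤ auxHL M qq x z :=
  Finset.sum_nonneg fun θ _ => mul_nonneg (hreg.q_nonneg x θ) (aux_binTail_nonneg h0 h1)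

lemma aux_auxHL_le_one (hreg : Regular M μ qq lam) (x : X) {z : ℝ}
    (h0 : 0 ≤ z) (h1 : z ≤ 1) : auxHL M qq x z ≤ 1 := by
  calc auxHL M qq x z ≤ ∑ θ ∈ Finset.Icc 1 (M.dp x), qq x θ :=
        Finset.sum_le_sum fun θ _ => by
          calc qq x θ * binTail (M.dp x) z (M.dp x - θ + 1) ≤ qq x θ * 1 :=
                mul_le_mul_of_nonneg_left (aux_binTail_le_one h0 h1) (hreg.q_nonneg x θ)
            _ = qq x θ := mul_one _
    _ ≤ 1 := aux_qq_sum_le_one hreg x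

lemma aux_auxG_bound (hreg : Regular M μ qq lam) (x : X) {z : ℝ}
    (h0 : 0 ≤ z) (h1 : z ≤ 1) : ‖auxG M μ qq x z‖ ≤ μ x * (M.dm x : ℝ) := by
  unfold auxG
  rw [Real.norm_eq_abs, abs_of_nonneg (mul_nonneg
    (mul_nonneg (hreg.μ_nonneg x) (Nat.cast_nonneg _)) (aux_auxHL_nonneg hreg x h0 h1))]
  calc μ x * (M.dm x : ℝ) * auxHL M qq x z ≤ μ x * (M.dm x : ℝ) * 1 :=
        mul_le_mul_of_nonneg_left (aux_auxHL_le_one hreg x h0 h1)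
          (mul_nonneg (hreg.μ_nonneg x) (Nat.cast_nonneg _))
    _ = μ x * (M.dm x : ℝ) := mul_one _

/-- Exponential-moment consequences for `A = 2` on the `dm` side. -/
lemma aux_moment (hreg : Regular M μ qq lam) (hexp : ExpMoment M) :
    ∃ C : ℝ, 0 ≤ C ∧
      (∀ n, Summable (fun x => empμ M n x * 2 ^ (M.dm x)) ∧
        ∑' x, empμ M n x * 2 ^ (M.dm x) ≤ C) ∧
      Summable (fun x => μ x * 2 ^ (M.dm x)) ∧ ∑' x, μ x * 2 ^ (M.dm x) ≤ C := by
  obtain ⟨-, C, hC⟩ := hexp 2 one_lt_two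
  have h2 : ∀ x : X, (0:ℝ) ≤ 2 ^ (M.dm x) := fun x => by positivity
  have hlim := aux_limit_summable M hreg.μ_nonneg hreg.μ_conv h2 hC
  refine ⟨max C 0, le_max_right _ _, fun n => ⟨(hC n).1, le_trans (hC n).2 (le_max_left _ _)⟩,
    hlim.1, le_trans hlim.2 (le_max_left _ _)⟩

lemma aux_summable_dm_mu (hreg : Regular M μ qq lam) (hexp : ExpMoment M) :
    Summable (fun x => μ x * (M.dm x : ℝ)) := by
  obtain ⟨C, -, -, hμ2, -⟩ := aux_moment hreg hexp
  refine Summable.of_nonneg_of_le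
    (fun x => mul_nonneg (hreg.μ_nonneg x) (Nat.cast_nonneg _)) (fun x => ?_) hμ2
  exact mul_le_mul_of_nonneg_left (aux_cast_le_two_pow _) (hreg.μ_nonneg x)

lemma aux_summable_empμ (M : Model X) (n : ℕ) : Summable (fun x => empμ M n x) := by
  have := aux_summable_finsupport M n (fun _ => (1:ℝ))
  simpa using this

lemma aux_abs_sub_le (hreg : Regular M μ qq lam) (n : ℕ) (x : X) :
    |empμ M n x - μ x| ≤ empμ M n x + μ x :=
  abs_le.2 ⟨by linarith [aux_empμ_nonneg M n x, hreg.μ_nonneg x],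
    by linarith [aux_empμ_nonneg M n x, hreg.μ_nonneg x]⟩

lemma aux_summable_v (hreg : Regular M μ qq lam) (hexp : ExpMoment M) (n : ℕ) :
    Summable (fun x => (M.dm x : ℝ) * |empμ M n x - μ x|) := by
  have h1 : Summable (fun x => (M.dm x : ℝ) * empμ M n x + μ x * (M.dm x : ℝ)) := by
    apply Summable.add _ (aux_summable_dm_mu hreg hexp)
    exact summable_of_ne_finset_zero (s := typesF M n)
      (fun x hx => by rw [aux_empμ_eq_zero M hx]; ring)
  refine Summable.of_nonneg_of_le
    (fun x => mul_nonneg (Nat.cast_nonneg _) (abs_nonneg _)) (fun x => ?_) h1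
  have := aux_abs_sub_le hreg n x
  have hd : (0:ℝ) ≤ (M.dm x : ℝ) := Nat.cast_nonneg _
  nlinarith [aux_empμ_nonneg M n x, hreg.μ_nonneg x]

/-- `v n := Σ_x d⁻_x |μ_x^{(n)} − μ_x| → 0`. -/
lemma aux_v_tendsto (hreg : Regular M μ qq lam) (hexp : ExpMoment M) :
    Tendsto (fun n => ∑' x, (M.dm x : ℝ) * |empμ M n x - μ x|) atTop (nhds 0) := by
  obtain ⟨C, hC0, hCn, hμ2S, hμ2⟩ := aux_moment hreg hexp
  have hδ := aux_scheffe M hreg.μ_nonneg hreg.μ_sum hreg.μ_conv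
  have habsS : ∀ n, Summable (fun x => |empμ M n x - μ x|) := fun n =>
    Summable.of_nonneg_of_le (fun x => abs_nonneg _) (aux_abs_sub_le hreg n)
      ((aux_summable_empμ M n).add hreg.μ_sum.summable)
  -- key bound for any K ≥ 1
  have key : ∀ K : ℕ, 1 ≤ K → ∀ n, ∑' x, (M.dm x : ℝ) * |empμ M n x - μ x|
      ≤ (K : ℝ) * (∑' x, |empμ M n x - μ x|) + ((K:ℝ)/2^K) * (2*C) := by
    intro K hK n
    have hpt : ∀ x, (M.dm x : ℝ) * |empμ M n x - μ x|
        ≤ (K:ℝ) * |empμ M n x - μ x|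
          + ((K:ℝ)/2^K) * (empμ M n x * 2 ^ (M.dm x) + μ x * 2 ^ (M.dm x)) := by
      intro x
      have he := aux_empμ_nonneg M n x
      have hm := hreg.μ_nonneg x
      have habs := aux_abs_sub_le hreg n x
      have habs0 : (0:ℝ) ≤ |empμ M n x - μ x| := abs_nonneg _
      have h2K : (0:ℝ) < 2 ^ K := by positivity
      have h2m : (0:ℝ) ≤ 2 ^ (M.dm x) := by positivity
      rcases le_or_gt (M.dm x) K with h | h
      · have hc : ((M.dm x : ℝ)) ≤ (K:ℝ) := by exact_mod_cast h
        have : (M.dm x : ℝ) * |empμ M n x - μ x| ≤ (K:ℝ) * |empμ M n x - μ x| :=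
          mul_le_mul_of_nonneg_right hc habs0
        have hrest : (0:ℝ) ≤ ((K:ℝ)/2^K) * (empμ M n x * 2 ^ (M.dm x) + μ x * 2 ^ (M.dm x)) := by
          positivity
        linarith
      · have hnat := aux_nat_ineq hK h.le
        have hcast : ((M.dm x : ℝ)) * 2^K ≤ (K:ℝ) * 2^(M.dm x) := by exact_mod_cast hnat
        have hd : ((M.dm x : ℝ)) ≤ ((K:ℝ)/2^K) * 2^(M.dm x) := by
          rw [div_mul_eq_mul_div, le_div_iff₀ h2K]
          linarith
        have h1 : (M.dm x : ℝ) * |empμ M n x - μ x|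
            ≤ (((K:ℝ)/2^K) * 2^(M.dm x)) * (empμ M n x + μ x) := by
          apply mul_le_mul hd habs habs0
          positivity
        have hfirst : (0:ℝ) ≤ (K:ℝ) * |empμ M n x - μ x| := by positivity
        nlinarith
    have hSrhs : Summable (fun x => (K:ℝ) * |empμ M n x - μ x|
        + ((K:ℝ)/2^K) * (empμ M n x * 2 ^ (M.dm x) + μ x * 2 ^ (M.dm x))) :=
      ((habsS n).mul_left _).add ((((hCn n).1).add hμ2S).mul_left _)
    calc ∑' x, (M.dm x : ℝ) * |empμ M n x - μ x|
        ≤ ∑' x, ((K:ℝ) * |empμ M n x - μ x|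
            + ((K:ℝ)/2^K) * (empμ M n x * 2 ^ (M.dm x) + μ x * 2 ^ (M.dm x))) :=
          Summable.tsum_le_tsum hpt (aux_summable_v hreg hexp n) hSrhs
      _ = (K:ℝ) * (∑' x, |empμ M n x - μ x|)
            + ((K:ℝ)/2^K) * (∑' x, (empμ M n x * 2 ^ (M.dm x) + μ x * 2 ^ (M.dm x))) := by
          rw [Summable.tsum_add ((habsS n).mul_left _) ((((hCn n).1).add hμ2S).mul_left _),
            tsum_mul_left, tsum_mul_left]
      _ ≤ (K:ℝ) * (∑' x, |empμ M n x - μ x|) + ((K:ℝ)/2^K) * (2*C) := by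
          have h1 : ∑' x, (empμ M n x * 2 ^ (M.dm x) + μ x * 2 ^ (M.dm x))
              = (∑' x, empμ M n x * 2 ^ (M.dm x)) + ∑' x, μ x * 2 ^ (M.dm x) :=
            Summable.tsum_add ((hCn n).1) hμ2S
          have h2 : ((0:ℝ)) ≤ (K:ℝ)/2^K := by positivity
          have := (hCn n).2
          nlinarith
  -- ε-argument
  rw [Metric.tendsto_atTop]
  intro ε hε
  have hgeo : Tendsto (fun K : ℕ => ((K:ℝ)/2^K) * (2*C)) atTop (nhds 0) := by
    have hs : Summable (fun K : ℕ => ((K:ℝ)/2^K) * (2*C)) := by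
      apply Summable.mul_right
      have : Summable (fun K : ℕ => (K:ℝ)^1 * (1/2:ℝ)^K) :=
        summable_pow_mul_geometric_of_norm_lt_one 1 (by rw [Real.norm_eq_abs, abs_of_pos (by norm_num : (0:ℝ) < 1/2)]; norm_num)
      apply this.congr
      intro K
      rw [pow_one, one_div, inv_pow, div_eq_mul_inv]
    exact hs.tendsto_atTop_zero
  obtain ⟨K, hK1, hKs⟩ : ∃ K : ℕ, 1 ≤ K ∧ ((K:ℝ)/2^K) * (2*C) < ε/2 := by
    have h1 : ∀ᶠ K : ℕ in atTop, ((K:ℝ)/2^K) * (2*C) < ε/2 :=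
      hgeo.eventually_lt_const (by positivity)
    exact ((eventually_ge_atTop 1).and h1).exists
  have hδ' : ∀ᶠ n in atTop, (∑' x, |empμ M n x - μ x|) < ε/(2*K) := by
    apply hδ.eventually_lt_const
    have : (0:ℝ) < (K:ℝ) := by exact_mod_cast hK1
    positivity
  obtain ⟨N, hN⟩ := eventually_atTop.1 hδ'
  refine ⟨N, fun n hn => ?_⟩
  have hvn : 0 ≤ ∑' x, (M.dm x : ℝ) * |empμ M n x - μ x| :=
    tsum_nonneg fun x => mul_nonneg (Nat.cast_nonneg _) (abs_nonneg _)
  rw [Real.dist_eq, sub_zero, abs_of_nonneg hvn]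
  have hKpos : (0:ℝ) < (K:ℝ) := by exact_mod_cast hK1
  have h1 := key K hK1 n
  have h2 := hN n hn
  have h3 : (K:ℝ) * (∑' x, |empμ M n x - μ x|) < (K:ℝ) * (ε/(2*K)) := by
    apply mul_lt_mul_of_pos_left h2 hKpos
  have h4 : (K:ℝ) * (ε/(2*K)) = ε/2 := by field_simp
  linarith

end Aux4
end DefaultCascade
namespace DefaultCascade
section Aux5
open Filter
variable {X : Type*} {M : Model X} {μ : X → ℝ} {qq : X → ℕ → ℝ} {lam : ℝ}

lemma aux_auxE_nonneg (n : ℕ) (x : X) : 0 ≤ auxE M qq n x :=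
  Finset.sum_nonneg fun _ _ => abs_nonneg _

lemma aux_summable_w (hreg : Regular M μ qq lam) (hexp : ExpMoment M) (n : ℕ) :
    Summable (fun x => μ x * (M.dm x : ℝ) * min (auxE M qq n x) 2) := by
  refine Summable.of_nonneg_of_le (fun x => ?_) (fun x => ?_)
    ((aux_summable_dm_mu hreg hexp).mul_right 2)
  · exact mul_nonneg (mul_nonneg (hreg.μ_nonneg x) (Nat.cast_nonneg _))
      (le_min (aux_auxE_nonneg n x) (by norm_num))
  · have h1 : min (auxE M qq n x) 2 ≤ 2 := min_le_right _ _
    have h2 : 0 ≤ μ x * (M.dm x : ℝ) := mul_nonneg (hreg.μ_nonneg x) (Nat.cast_nonneg _)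
    nlinarith

lemma aux_w_tendsto (hM : M.Valid) (hreg : Regular M μ qq lam) (hexp : ExpMoment M) :
    Tendsto (fun n => ∑' x, μ x * (M.dm x : ℝ) * min (auxE M qq n x) 2) atTop (nhds 0) := by
  have hbS : Summable (fun x => μ x * (M.dm x : ℝ) * 2) :=
    (aux_summable_dm_mu hreg hexp).mul_right 2
  have hE : ∀ x, Tendsto (fun n => auxE M qq n x) atTop (nhds 0) := by
    intro x
    have : Tendsto (fun n => ∑ θ ∈ Finset.Icc 1 (M.dp x), |M.q n x θ - qq x θ|) atTop
        (nhds (∑ θ ∈ Finset.Icc 1 (M.dp x), (0:ℝ))) := by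
      apply tendsto_finset_sum
      intro θ hθ
      have hθ' : θ ≤ M.dp x := (Finset.mem_Icc.1 hθ).2
      have := ((hreg.q_conv x θ hθ').sub (tendsto_const_nhds (x := qq x θ))).abs
      simpa using this
    simpa [auxE] using this
  have hpt : ∀ x, Tendsto (fun n => μ x * (M.dm x : ℝ) * min (auxE M qq n x) 2) atTop
      (nhds 0) := by
    intro x
    have h1 : Tendsto (fun n => min (auxE M qq n x) 2) atTop (nhds (min 0 2)) :=
      (hE x).min tendsto_const_nhds
    rw [min_eq_left (by norm_num : (0:ℝ) ≤ 2)] at h1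
    have := h1.const_mul (μ x * (M.dm x : ℝ))
    simpa using this
  have := tendsto_tsum_of_dominated_convergence
    (f := fun n x => μ x * (M.dm x : ℝ) * min (auxE M qq n x) 2)
    (g := fun _ => (0:ℝ)) (bound := fun x => μ x * (M.dm x : ℝ) * 2) hbS hpt
    (Filter.Eventually.of_forall fun n x => by
      have h0 : 0 ≤ μ x * (M.dm x : ℝ) * min (auxE M qq n x) 2 :=
        mul_nonneg (mul_nonneg (hreg.μ_nonneg x) (Nat.cast_nonneg _))
          (le_min (aux_auxE_nonneg n x) (by norm_num))
      rw [Real.norm_eq_abs, abs_of_nonneg h0]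
      show μ x * (M.dm x : ℝ) * min (auxE M qq n x) 2 ≤ μ x * (M.dm x : ℝ) * 2
      have h1 : min (auxE M qq n x) 2 ≤ 2 := min_le_right _ _
      have h2 : 0 ≤ μ x * (M.dm x : ℝ) := mul_nonneg (hreg.μ_nonneg x) (Nat.cast_nonneg _)
      nlinarith)
  simpa using this

lemma aux_pointwise_bound (hM : M.Valid) (hreg : Regular M μ qq lam)
    (n : ℕ) (x : X) {z : ℝ} (h0 : 0 ≤ z) (h1 : z ≤ 1) :
    |auxF M n x z - auxG M μ qq x z|
      ≤ 3 * ((M.dm x : ℝ) * |empμ M n x - μ x|)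
        + μ x * (M.dm x : ℝ) * min (auxE M qq n x) 2 := by
  have hd : (0:ℝ) ≤ (M.dm x : ℝ) := Nat.cast_nonneg _
  have he : 0 ≤ empμ M n x := aux_empμ_nonneg M n x
  have hm : 0 ≤ μ x := hreg.μ_nonneg x
  have hE : 0 ≤ auxE M qq n x := aux_auxE_nonneg n x
  have hHL0 : 0 ≤ auxHL M qq x z := aux_auxHL_nonneg hreg x h0 h1
  have hHL1 : auxHL M qq x z ≤ 1 := aux_auxHL_le_one hreg x h0 h1
  have hHdiff : |auxH M n x z - auxHL M qq x z| ≤ auxE M qq n x := by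
    have heq : auxH M n x z - auxHL M qq x z = ∑ θ ∈ Finset.Icc 1 (M.dp x),
        (M.q n x θ - qq x θ) * binTail (M.dp x) z (M.dp x - θ + 1) := by
      unfold auxH auxHL
      rw [← Finset.sum_sub_distrib]
      exact Finset.sum_congr rfl fun θ _ => by ring
    rw [heq]
    refine (Finset.abs_sum_le_sum_abs _ _).trans (Finset.sum_le_sum fun θ _ => ?_)
    rw [abs_mul]
    calc |M.q n x θ - qq x θ| * |binTail (M.dp x) z (M.dp x - θ + 1)|
        ≤ |M.q n x θ - qq x θ| * 1 := by
          apply mul_le_mul_of_nonneg_left _ (abs_nonneg _)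
          rw [abs_of_nonneg (aux_binTail_nonneg h0 h1)]
          exact aux_binTail_le_one h0 h1
      _ = |M.q n x θ - qq x θ| := mul_one _
  have key : empμ M n x * |auxH M n x z - auxHL M qq x z|
      ≤ 2 * |empμ M n x - μ x| + μ x * min (auxE M qq n x) 2 := by
    by_cases hx : x ∈ typesF M n
    · have hE2 : auxE M qq n x ≤ 2 := by
        have h1' := aux_q_sum_le_one M hM hx
        have h2' := aux_qq_sum_le_one hreg x
        have h3' : auxE M qq n x ≤ ∑ θ ∈ Finset.Icc 1 (M.dp x), (M.q n x θ + qq x θ) := by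
          apply Finset.sum_le_sum
          intro θ _
          exact abs_le.2 ⟨by linarith [hM.q_nonneg n x θ, hreg.q_nonneg x θ],
            by linarith [hM.q_nonneg n x θ, hreg.q_nonneg x θ]⟩
        rw [Finset.sum_add_distrib] at h3'
        linarith
      rw [min_eq_left hE2]
      have h1' : empμ M n x * |auxH M n x z - auxHL M qq x z| ≤ empμ M n x * auxE M qq n x :=
        mul_le_mul_of_nonneg_left hHdiff he
      have h2' : empμ M n x ≤ |empμ M n x - μ x| + μ x := by
        have := le_abs_self (empμ M n x - μ x); linarith
      nlinarith [abs_nonneg (empμ M n x - μ x)]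
    · rw [aux_empμ_eq_zero M hx, zero_mul]
      have h1' : (0:ℝ) ≤ min (auxE M qq n x) 2 := le_min hE (by norm_num)
      nlinarith [abs_nonneg ((0:ℝ) - μ x), mul_nonneg hm h1']
  have hdecomp : auxF M n x z - auxG M μ qq x z
      = (M.dm x : ℝ) * (empμ M n x * (auxH M n x z - auxHL M qq x z)
        + (empμ M n x - μ x) * auxHL M qq x z) := by
    unfold auxF auxG; ring
  rw [hdecomp, abs_mul, abs_of_nonneg hd]
  have htri : |empμ M n x * (auxH M n x z - auxHL M qq x z)
      + (empμ M n x - μ x) * auxHL M qq x z|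
      ≤ empμ M n x * |auxH M n x z - auxHL M qq x z| + |empμ M n x - μ x| := by
    refine (abs_add_le _ _).trans ?_
    rw [abs_mul, abs_mul, abs_of_nonneg he]
    have : |empμ M n x - μ x| * |auxHL M qq x z| ≤ |empμ M n x - μ x| * 1 := by
      apply mul_le_mul_of_nonneg_left _ (abs_nonneg _)
      rw [abs_of_nonneg hHL0]; exact hHL1
    linarith
  calc (M.dm x : ℝ) * |empμ M n x * (auxH M n x z - auxHL M qq x z)
        + (empμ M n x - μ x) * auxHL M qq x z|
      ≤ (M.dm x : ℝ) * (2 * |empμ M n x - μ x| + μ x * min (auxE M qq n x) 2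
          + |empμ M n x - μ x|) := by
        apply mul_le_mul_of_nonneg_left _ hd
        calc |empμ M n x * (auxH M n x z - auxHL M qq x z)
              + (empμ M n x - μ x) * auxHL M qq x z|
            ≤ empμ M n x * |auxH M n x z - auxHL M qq x z| + |empμ M n x - μ x| := htri
          _ ≤ 2 * |empμ M n x - μ x| + μ x * min (auxE M qq n x) 2
              + |empμ M n x - μ x| := by linarith
    _ = 3 * ((M.dm x : ℝ) * |empμ M n x - μ x|)
        + μ x * (M.dm x : ℝ) * min (auxE M qq n x) 2 := by ring

lemma aux_summable_auxF (M : Model X) (n : ℕ) (z : ℝ) : Summable (auxF M n · z) :=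
  summable_of_ne_finset_zero (s := typesF M n) (fun x hx => aux_auxF_zero M hx z)

lemma aux_summable_auxG (hreg : Regular M μ qq lam) (hexp : ExpMoment M) {z : ℝ}
    (h0 : 0 ≤ z) (h1 : z ≤ 1) : Summable (auxG M μ qq · z) :=
  Summable.of_norm_bounded (aux_summable_dm_mu hreg hexp)
    (fun x => aux_auxG_bound hreg x h0 h1)

/-- Master uniform-error lemma. -/
lemma aux_uniform (hM : M.Valid) (hreg : Regular M μ qq lam) (hexp : ExpMoment M) :
    ∃ u : ℕ → ℝ, Tendsto u atTop (nhds 0) ∧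
      ∀ n, ∀ z ∈ Set.Icc (0:ℝ) 1, |fWn M n z - fW M μ qq lam z| ≤ u n := by
  refine ⟨fun n => |lamn M n - lam| + (3 * ∑' x, (M.dm x : ℝ) * |empμ M n x - μ x|
    + ∑' x, μ x * (M.dm x : ℝ) * min (auxE M qq n x) 2), ?_, ?_⟩
  · have h1 : Tendsto (fun n => |lamn M n - lam|) atTop (nhds 0) := by
      have := (hreg.lam_conv.sub (tendsto_const_nhds (x := lam))).abs
      simpa using this
    have h2 := (aux_v_tendsto hreg hexp).const_mul (3:ℝ)
    have h3 := aux_w_tendsto hM hreg hexp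
    have := h1.add ((h2.add h3))
    simpa using this
  · intro n z hz
    obtain ⟨h0, h1⟩ := hz
    have SF := aux_summable_auxF M n z
    have SG := aux_summable_auxG hreg hexp h0 h1
    have Sv := aux_summable_v hreg hexp n
    have Sw := aux_summable_w hreg hexp n
    have SB : Summable (fun x => 3 * ((M.dm x : ℝ) * |empμ M n x - μ x|)
        + μ x * (M.dm x : ℝ) * min (auxE M qq n x) 2) := (Sv.mul_left 3).add Sw
    have Sdiff : Summable (fun x => auxF M n x z - auxG M μ qq x z) := SF.sub SG
    have Sabs : Summable (fun x => |auxF M n x z - auxG M μ qq x z|) :=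
      Summable.of_nonneg_of_le (fun x => abs_nonneg _)
        (fun x => aux_pointwise_bound hM hreg n x h0 h1) SB
    have step1 : fWn M n z - fW M μ qq lam z
        = (lamn M n - lam) * z - ∑' x, (auxF M n x z - auxG M μ qq x z) := by
      rw [aux_fWn_eq' M n z, aux_fW_eq' M μ qq lam z, Summable.tsum_sub SF SG]
      ring
    rw [step1]
    have habs1 : |(lamn M n - lam) * z| ≤ |lamn M n - lam| := by
      rw [abs_mul]
      calc |lamn M n - lam| * |z| ≤ |lamn M n - lam| * 1 := by
            apply mul_le_mul_of_nonneg_left _ (abs_nonneg _)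
            rw [abs_of_nonneg h0]; exact h1
        _ = |lamn M n - lam| := mul_one _
    have habs2 : |∑' x, (auxF M n x z - auxG M μ qq x z)|
        ≤ 3 * (∑' x, (M.dm x : ℝ) * |empμ M n x - μ x|)
          + ∑' x, μ x * (M.dm x : ℝ) * min (auxE M qq n x) 2 := by
      calc |∑' x, (auxF M n x z - auxG M μ qq x z)|
          ≤ ∑' x, |auxF M n x z - auxG M μ qq x z| := by
            have := norm_tsum_le_tsum_norm (f := fun x => auxF M n x z - auxG M μ qq x z)
              (by simpa [Real.norm_eq_abs] using Sabs)
            simpa [Real.norm_eq_abs] using this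
        _ ≤ ∑' x, (3 * ((M.dm x : ℝ) * |empμ M n x - μ x|)
              + μ x * (M.dm x : ℝ) * min (auxE M qq n x) 2) :=
            Summable.tsum_le_tsum (fun x => aux_pointwise_bound hM hreg n x h0 h1) Sabs SB
        _ = 3 * (∑' x, (M.dm x : ℝ) * |empμ M n x - μ x|)
              + ∑' x, μ x * (M.dm x : ℝ) * min (auxE M qq n x) 2 := by
            rw [Summable.tsum_add (Sv.mul_left 3) Sw, tsum_mul_left]
    calc |(lamn M n - lam) * z - ∑' x, (auxF M n x z - auxG M μ qq x z)|
        ≤ |(lamn M n - lam) * z| + |∑' x, (auxF M n x z - auxG M μ qq x z)| := abs_sub _ _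
      _ ≤ |lamn M n - lam| + (3 * (∑' x, (M.dm x : ℝ) * |empμ M n x - μ x|)
            + ∑' x, μ x * (M.dm x : ℝ) * min (auxE M qq n x) 2) := by
          linarith

end Aux5
end DefaultCascade
namespace DefaultCascade
section Aux6
open Filter Set
variable {X : Type*} {M : Model X} {μ : X → ℝ} {qq : X → ℕ → ℝ} {lam : ℝ}

lemma aux_fW_continuousOn (hreg : Regular M μ qq lam) (hexp : ExpMoment M) :
    ContinuousOn (fW M μ qq lam) (Set.Icc (0:ℝ) 1) := by
  have h1 : ContinuousOn (fun z => ∑' x, auxG M μ qq x z) (Set.Icc (0:ℝ) 1) := by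
    apply continuousOn_tsum (u := fun x => μ x * (M.dm x : ℝ))
    · intro x
      apply Continuous.continuousOn
      unfold auxG auxHL
      exact continuous_const.mul
        (continuous_finset_sum _ fun θ _ => continuous_const.mul (aux_binTail_continuous _ _))
    · exact aux_summable_dm_mu hreg hexp
    · intro x z hz
      exact aux_auxG_bound hreg x hz.1 hz.2
  have heq : fW M μ qq lam = fun z => lam * z - ∑' x, auxG M μ qq x z := rfl
  rw [heq]
  exact ((continuous_const.mul continuous_id).continuousOn).sub h1

lemma aux_fW_zero : fW M μ qq lam 0 = 0 := by
  rw [aux_fW_eq']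
  have h : (fun x => auxG M μ qq x 0) = fun _ => (0:ℝ) := funext fun x => by
    unfold auxG auxHL
    rw [Finset.sum_eq_zero (fun θ _ => by rw [aux_binTail_zero (by omega)]; ring)]
    ring
  rw [h, tsum_zero]; ring

lemma aux_zstar_mem (hreg : Regular M μ qq lam) (hexp : ExpMoment M) :
    zstar M μ qq lam ∈ {z : ℝ | z ∈ Set.Icc (0:ℝ) 1 ∧ fW M μ qq lam z = 0} := by
  have hset : {z : ℝ | z ∈ Set.Icc (0:ℝ) 1 ∧ fW M μ qq lam z = 0}
      = Set.Icc (0:ℝ) 1 ∩ fW M μ qq lam ⁻¹' {0} := by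
    ext z; simp [Set.mem_setOf_eq]
  have hcl : IsClosed {z : ℝ | z ∈ Set.Icc (0:ℝ) 1 ∧ fW M μ qq lam z = 0} := by
    rw [hset]
    exact (aux_fW_continuousOn hreg hexp).preimage_isClosed_of_isClosed
      isClosed_Icc isClosed_singleton
  have hne : {z : ℝ | z ∈ Set.Icc (0:ℝ) 1 ∧ fW M μ qq lam z = 0}.Nonempty :=
    ⟨0, ⟨le_rfl, zero_le_one⟩, aux_fW_zero⟩
  have hbdd : BddAbove {z : ℝ | z ∈ Set.Icc (0:ℝ) 1 ∧ fW M μ qq lam z = 0} :=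
    ⟨1, fun z hz => hz.1.2⟩
  exact hcl.csSup_mem hne hbdd

end Aux6
end DefaultCascade
namespace DefaultCascade

/-- **Convergence of the finite-`n` largest zero** (from the proof of Theorem 3.6).
Under the regularity and exponential-moment assumptions, if `z⋆ ∈ (0,1]` and
`f_W′(z⋆) > 0`, then for each `n` the set `{z ∈ [0,1] : f_W^(n)(z) = 0}` contains `0`,
its supremum `ẑ_n` is itself a zero of `f_W^(n)`, and `ẑ_n → z⋆` as `n → ∞`. -/
theorem zhat_converges
    {X : Type*} [Countable X] (M : Model X) (hM : M.Valid)
    (μ : X → ℝ) (qq : X → ℕ → ℝ) (lam : ℝ) (hreg : Regular M μ qq lam)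
    (hexp : ExpMoment M)
    (hz : zstar M μ qq lam ∈ Set.Ioc (0:ℝ) 1)
    (α : ℝ) (hα : 0 < α)
    (hderiv : HasDerivAt (fW M μ qq lam) α (zstar M μ qq lam)) :
    (∀ n, fWn M n 0 = 0) ∧
    (∀ n, fWn M n (zhat M n) = 0) ∧
    Tendsto (fun n => zhat M n) atTop (nhds (zstar M μ qq lam)) := by
  refine ⟨fun n => aux_fWn_zero M n, fun n => (aux_zhat_mem M n).2, ?_⟩
  obtain ⟨u, hu, hbound⟩ := aux_uniform hM hreg hexp
  set zs := zstar M μ qq lam with hzs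
  have hz0 : 0 < zs := hz.1
  have hz1 : zs ≤ 1 := hz.2
  have hfWzs : fW M μ qq lam zs = 0 := (aux_zstar_mem hreg hexp).2
  have hbdd : BddAbove {z : ℝ | z ∈ Set.Icc (0:ℝ) 1 ∧ fW M μ qq lam z = 0} :=
    ⟨1, fun z hz => hz.1.2⟩
  have hle_zs : ∀ y, y ∈ Set.Icc (0:ℝ) 1 → fW M μ qq lam y = 0 → y ≤ zs :=
    fun y hy1 hy2 => le_csSup hbdd ⟨hy1, hy2⟩
  have hcontOn := aux_fW_continuousOn hreg hexp
  -- slope facts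
  have hslope : Tendsto (slope (fW M μ qq lam) zs) (nhdsWithin zs {zs}ᶜ) (nhds α) :=
    hasDerivAt_iff_tendsto_slope.1 hderiv
  have hslope_pos : ∀ᶠ w in nhdsWithin zs {zs}ᶜ, 0 < slope (fW M μ qq lam) zs w :=
    hslope.eventually (eventually_gt_nhds hα)
  have hpos_ev : ∀ᶠ w in nhdsWithin zs (Set.Ioi zs), 0 < fW M μ qq lam w := by
    have h1 : ∀ᶠ w in nhdsWithin zs (Set.Ioi zs), 0 < slope (fW M μ qq lam) zs w :=
      hslope_pos.filter_mono (nhdsWithin_mono zs (fun w hw => ne_of_gt hw))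
    filter_upwards [h1, self_mem_nhdsWithin] with w hw hw'
    have hwgt : zs < w := hw'
    have := mul_pos hw (sub_pos.2 hwgt)
    rw [slope_def_field] at this
    rw [div_mul_cancel₀ _ (by linarith : w - zs ≠ 0)] at this
    rw [hfWzs] at this
    linarith
  have hneg_ev : ∀ᶠ w in nhdsWithin zs (Set.Iio zs), fW M μ qq lam w < 0 := by
    have h1 : ∀ᶠ w in nhdsWithin zs (Set.Iio zs), 0 < slope (fW M μ qq lam) zs w :=
      hslope_pos.filter_mono (nhdsWithin_mono zs (fun w hw => ne_of_lt hw))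
    filter_upwards [h1, self_mem_nhdsWithin] with w hw hw'
    have hwlt : w < zs := hw'
    have := mul_neg_of_pos_of_neg hw (sub_neg.2 hwlt)
    rw [slope_def_field, div_mul_cancel₀ _ (by linarith : w - zs ≠ 0), hfWzs] at this
    linarith
  -- positivity of fW on (zs, 1]
  have hpos : ∀ w, zs < w → w ≤ 1 → 0 < fW M μ qq lam w := by
    intro w hw hw1
    by_contra hcon
    push_neg at hcon
    rcases eq_or_lt_of_le hcon with heq | hlt
    · exact absurd (hle_zs w ⟨by linarith, hw1⟩ heq) (not_le.2 hw)
    · obtain ⟨w2, hw2pos, hw2mem⟩ :=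
        (hpos_ev.and (eventually_mem_set.2 (Ioo_mem_nhdsGT hw))).exists
      obtain ⟨hw2a, hw2b⟩ := hw2mem
      have hsub : Set.Icc w2 w ⊆ Set.Icc (0:ℝ) 1 :=
        Set.Icc_subset_Icc (by linarith) hw1
      have hivt := intermediate_value_Icc' (le_of_lt hw2b) (hcontOn.mono hsub)
      have h0mem : (0:ℝ) ∈ Set.Icc (fW M μ qq lam w) (fW M μ qq lam w2) :=
        ⟨le_of_lt hlt, le_of_lt hw2pos⟩
      obtain ⟨c, hc, hc0⟩ := hivt h0mem
      have : c ≤ zs := hle_zs c ⟨by linarith [hc.1], le_trans hc.2 hw1⟩ hc0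
      linarith [hc.1]
  -- the convergence
  rw [Metric.tendsto_atTop]
  intro ε hε
  -- pick a lower test point w
  obtain ⟨w, hwneg, hwIoo⟩ : ∃ w, fW M μ qq lam w < 0 ∧ w ∈ Set.Ioo (max 0 (zs - ε)) zs := by
    have hmax : max 0 (zs - ε) < zs := max_lt hz0 (by linarith)
    exact (hneg_ev.and (eventually_mem_set.2 (Ioo_mem_nhdsLT hmax))).exists
  have hw0 : 0 < w := lt_of_le_of_lt (le_max_left _ _) hwIoo.1
  have hwε : zs - ε < w := lt_of_le_of_lt (le_max_right _ _) hwIoo.1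
  have hwzs : w < zs := hwIoo.2
  have hwIcc : w ∈ Set.Icc (0:ℝ) 1 := ⟨le_of_lt hw0, by linarith⟩
  -- eventual lower bound: zhat n > zs - ε
  have hlower : ∀ᶠ n in atTop, zs - ε < zhat M n := by
    have hev : ∀ᶠ n in atTop, u n < -(fW M μ qq lam w) :=
      hu.eventually_lt_const (by linarith)
    filter_upwards [hev] with n hn
    have hb := hbound n w hwIcc
    have hfWnw : fWn M n w < 0 := by
      have := abs_le.1 hb
      linarith [this.2]
    have hivt := intermediate_value_Icc (by linarith : w ≤ 1)
      ((aux_fWn_continuous M n).continuousOn)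
    have h0mem : (0:ℝ) ∈ Set.Icc (fWn M n w) (fWn M n 1) :=
      ⟨le_of_lt hfWnw, aux_fWn_one M hM hreg n⟩
    obtain ⟨c, hc, hc0⟩ := hivt h0mem
    have hcmem : c ∈ {z : ℝ | z ∈ Set.Icc (0:ℝ) 1 ∧ fWn M n z = 0} :=
      ⟨⟨by linarith [hc.1], hc.2⟩, hc0⟩
    have : c ≤ zhat M n := le_csSup ⟨1, fun z hz => hz.1.2⟩ hcmem
    linarith [hc.1]
  -- eventual upper bound: zhat n < zs + ε
  have hupper : ∀ᶠ n in atTop, zhat M n < zs + ε := by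
    rcases le_or_gt (zs + ε) 1 with hcase | hcase
    · -- compact minimum of fW on [zs+ε, 1]
      have hcomp : IsCompact (Set.Icc (zs + ε) 1) := isCompact_Icc
      have hne : (Set.Icc (zs + ε) 1).Nonempty := ⟨zs + ε, le_rfl, hcase⟩
      have hsub : Set.Icc (zs + ε) 1 ⊆ Set.Icc (0:ℝ) 1 :=
        Set.Icc_subset_Icc (by linarith) le_rfl
      obtain ⟨xm, hxm, hxmin⟩ := hcomp.exists_isMinOn hne (hcontOn.mono hsub)
      have hm : 0 < fW M μ qq lam xm := hpos xm (by linarith [hxm.1]) hxm.2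
      have hev : ∀ᶠ n in atTop, u n < fW M μ qq lam xm := hu.eventually_lt_const hm
      filter_upwards [hev] with n hn
      by_contra hcon
      push_neg at hcon
      have hzh := aux_zhat_mem M n
      have hzhIcc : zhat M n ∈ Set.Icc (zs + ε) 1 := ⟨hcon, hzh.1.2⟩
      have hb := hbound n (zhat M n) (hsub hzhIcc)
      have hge : fW M μ qq lam xm ≤ fW M μ qq lam (zhat M n) := hxmin hzhIcc
      have := abs_le.1 hb
      rw [hzh.2] at this
      linarith [this.1]
    · filter_upwards with n
      have := (aux_zhat_mem M n).1.2
      linarith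
  obtain ⟨N, hN⟩ := eventually_atTop.1 (hlower.and hupper)
  refine ⟨N, fun n hn => ?_⟩
  obtain ⟨h1, h2⟩ := hN n hn
  rw [Real.dist_eq, abs_sub_lt_iff]
  constructor <;> linarith

end DefaultCascade
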